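/- Let p > 2 be an integer with p ≡ 2 (mod 4), and let q be an odd integer with 0 < q < p and gcd(p, q) = 1. Set ζ := exp(iπ(p−q)/p) ∈ ℂ. Then for every integer m, ζ^{2m} + ζ^{−2m} ≠ 0, and for every integer l ≥ 1 one has ∑_{a=1, a odd}^{p−1} (−1)^{(a−1)/2} (ζ^a + ζ^{−a})^{2l} = 2 · ∑_{m=−l}^{l} binom(2l, l+m) / (ζ^{2m} + ζ^{−2m}). -/

import Mathlib

open Finset

/-- Binomial expansion of `(y + y⁻¹)^(2l)` indexed by `m ∈ [-l, l]`. -/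
lemma aux_expand (y : ℂ) (hy : y ≠ 0) (l : ℕ) :
    (y + y⁻¹) ^ (2 * l)
      = ∑ m ∈ Finset.Icc (-(l : ℤ)) (l : ℤ),
          ((2 * l).choose ((l : ℤ) + m).toNat : ℂ) * y ^ (2 * m) := by
  have h1 : (y + y⁻¹) ^ (2 * l)
      = ∑ k ∈ Finset.range (2 * l + 1),
          ((2 * l).choose k : ℂ) * y ^ (2 * (k : ℤ) - 2 * l) := by
    rw [add_pow]
    refine Finset.sum_congr rfl fun k hk => ?_
    simp only [Finset.mem_range] at hk
    have h2 : y ^ k * y⁻¹ ^ (2 * l - k) = y ^ (2 * (k : ℤ) - 2 * l) := by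
      rw [← zpow_natCast y k, ← zpow_natCast y⁻¹ (2 * l - k), inv_zpow, ← zpow_neg,
        ← zpow_add₀ hy]
      congr 1
      have : ((2 * l - k : ℕ) : ℤ) = 2 * l - k := by
        push_cast [Nat.cast_sub (by omega : k ≤ 2 * l)]; ring
      rw [this]; ring
    rw [h2]; ring
  rw [h1]
  refine Finset.sum_nbij' (fun k => (k : ℤ) - l) (fun m => ((l : ℤ) + m).toNat) ?_ ?_ ?_ ?_ ?_
  · intro k hk; simp only [Finset.mem_range] at hk; simp only [Finset.mem_Icc]; omega
  · intro m hm; simp only [Finset.mem_Icc] at hm; simp only [Finset.mem_range]; omega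
  · intro k hk; simp only [Finset.mem_range] at hk; omega
  · intro m hm; simp only [Finset.mem_Icc] at hm; omega
  · intro k hk
    simp only [Finset.mem_range] at hk
    have h2 : ((l : ℤ) + ((k : ℤ) - l)).toNat = k := by omega
    rw [h2]
    congr 1
    ring

/-- The alternating sum over odd residues. -/
lemma aux_inner (p : ℕ) (hmod : p % 4 = 2) (x : ℂ) (hx1 : x ^ p = 1) (hx2 : x ^ 2 ≠ -1) :
    ∑ a ∈ (Finset.range p).filter (fun a => Odd a),
        (-1 : ℂ) ^ ((a - 1) / 2) * x ^ a = 2 * x / (1 + x ^ 2) := by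
  have hne : (1 : ℂ) + x ^ 2 ≠ 0 := fun h => hx2 (by linear_combination h)
  have hre : ∑ a ∈ (Finset.range p).filter (fun a => Odd a),
      (-1 : ℂ) ^ ((a - 1) / 2) * x ^ a
      = ∑ j ∈ Finset.range (p / 2), x * (-x ^ 2) ^ j := by
    refine Finset.sum_nbij' (fun a => a / 2) (fun j => 2 * j + 1) ?_ ?_ ?_ ?_ ?_
    · intro a ha
      simp only [Finset.mem_filter, Finset.mem_range, Nat.odd_iff] at ha
      simp only [Finset.mem_range]; omega
    · intro j hj
      simp only [Finset.mem_range] at hj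
      simp only [Finset.mem_filter, Finset.mem_range, Nat.odd_iff]; omega
    · intro a ha
      simp only [Finset.mem_filter, Finset.mem_range, Nat.odd_iff] at ha; omega
    · intro j hj; omega
    · intro a ha
      simp only [Finset.mem_filter, Finset.mem_range, Nat.odd_iff] at ha
      obtain ⟨t, ht⟩ : ∃ t, a = 2 * t + 1 := ⟨a / 2, by omega⟩
      subst ht
      have h1 : (2 * t + 1 - 1) / 2 = t := by omega
      have h2 : (2 * t + 1) / 2 = t := by omega
      rw [h1, h2, neg_pow]
      ring
  rw [hre, ← Finset.mul_sum, geom_sum_eq (fun h => hx2 (by linear_combination -h))]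
  have hxp : (-x ^ 2) ^ (p / 2) = -1 := by
    rw [neg_pow, ← pow_mul]
    have h2 : 2 * (p / 2) = p := by omega
    rw [h2, hx1]
    have ho : Odd (p / 2) := by rw [Nat.odd_iff]; omega
    rw [ho.neg_one_pow]; ring
  rw [hxp]
  have hne2 : (-x ^ 2 - 1 : ℂ) ≠ 0 := fun h => hne (by linear_combination -h)
  have hne3 : (-1 - x ^ 2 : ℂ) ≠ 0 := fun h => hne (by linear_combination -h)
  field_simp [hne2, hne3]
  ring

theorem typeD_multiplicity_rewriting
    (p q : ℕ) (hp2 : 2 < p) (hmod : p % 4 = 2) (hqo : Odd q)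
    (hq0 : 0 < q) (hqp : q < p) (hgcd : Nat.gcd p q = 1)
    (ζ : ℂ) (hζ : ζ = Complex.exp (Complex.I * Real.pi * ((p : ℂ) - q) / p)) :
    (∀ m : ℤ, ζ ^ (2 * m) + ζ ^ (-(2 * m)) ≠ 0)
    ∧ ∀ l : ℕ, 1 ≤ l →
      ∑ a ∈ (Finset.range p).filter (fun a => Odd a),
        (-1 : ℂ) ^ ((a - 1) / 2) * (ζ ^ (a : ℤ) + ζ ^ (-(a : ℤ))) ^ (2 * l)
      = 2 * ∑ m ∈ Finset.Icc (-(l : ℤ)) (l : ℤ),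
          ((2 * l).choose ((l : ℤ) + m).toNat : ℂ) / (ζ ^ (2 * m) + ζ ^ (-(2 * m))) := by
  have hζ0 : ζ ≠ 0 := by rw [hζ]; exact Complex.exp_ne_zero _
  have hπ : (Real.pi : ℂ) ≠ 0 := by exact_mod_cast Real.pi_ne_zero
  have hp0 : (p : ℂ) ≠ 0 := by exact_mod_cast (by omega : p ≠ 0)
  -- ζ^p = -1
  have hzp : ζ ^ p = -1 := by
    rw [hζ, ← Complex.exp_nat_mul]
    have h : (p : ℂ) * (Complex.I * Real.pi * ((p : ℂ) - q) / p)
        = ((p - q : ℕ) : ℂ) * (Real.pi * Complex.I) := by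
      push_cast [Nat.cast_sub hqp.le]
      field_simp
    rw [h, Complex.exp_nat_mul, Complex.exp_pi_mul_I]
    exact Odd.neg_one_pow (by rw [Nat.odd_iff] at hqo ⊢; omega)
  -- key : ζ^(4m) ≠ -1
  have key : ∀ m : ℤ, ζ ^ (4 * m) ≠ -1 := by
    intro m hm
    rw [hζ, ← Complex.exp_int_mul, ← Complex.exp_pi_mul_I,
      Complex.exp_eq_exp_iff_exists_int] at hm
    obtain ⟨n, hn⟩ := hm
    have hn' : 4 * (m : ℂ) * (Complex.I * Real.pi * ((p : ℂ) - q))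
        = (Real.pi * Complex.I + n * (2 * Real.pi * Complex.I)) * p := by
      field_simp at hn
      push_cast at hn
      linear_combination (Complex.I * (Real.pi : ℂ)) * hn
    have h3 : (Complex.I * (Real.pi : ℂ)) *
        (4 * (m : ℂ) * ((p : ℂ) - q) - (1 + 2 * (n : ℂ)) * p) = 0 := by
      linear_combination hn'
    have h4 : 4 * (m : ℂ) * ((p : ℂ) - q) = (1 + 2 * (n : ℂ)) * p := by
      rcases mul_eq_zero.mp h3 with h | h
      · exact absurd h (mul_ne_zero Complex.I_ne_zero hπ)
      · linear_combination h
    have h5 : (4 * m) * ((p : ℤ) - q) = (1 + 2 * n) * p := by exact_mod_cast h4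
    obtain ⟨t, ht⟩ : ∃ t, p = 4 * t + 2 := ⟨p / 4, by omega⟩
    have h6 : 2 * (m * (4 * (t : ℤ) + 2 - q)) = (1 + 2 * n) * (2 * t + 1) := by
      have : ((p : ℤ)) = 4 * t + 2 := by exact_mod_cast ht
      rw [this] at h5
      linarith
    have heven : Even ((1 + 2 * n) * (2 * (t : ℤ) + 1)) :=
      h6 ▸ ⟨m * (4 * (t : ℤ) + 2 - q), by ring⟩
    have hodd : Odd ((1 + 2 * n) * (2 * (t : ℤ) + 1)) := Odd.mul ⟨n, by ring⟩ ⟨t, by ring⟩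
    exact (Int.not_odd_iff_even.mpr heven) hodd
  -- part 1
  have part1 : ∀ m : ℤ, ζ ^ (2 * m) + ζ ^ (-(2 * m)) ≠ 0 := by
    intro m h
    apply key m
    have e1 : ζ ^ (2 * m) * (ζ ^ (2 * m) + ζ ^ (-(2 * m))) = ζ ^ (4 * m) + 1 := by
      rw [mul_add, ← zpow_add₀ hζ0, ← zpow_add₀ hζ0]
      have e2 : 2 * m + 2 * m = 4 * m := by ring
      have e3 : 2 * m + -(2 * m) = 0 := by ring
      rw [e2, e3, zpow_zero]
    rw [h, mul_zero] at e1
    linear_combination -e1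
  refine ⟨part1, fun l hl => ?_⟩
  -- facts about x_m = ζ^(2m)
  have hx1 : ∀ m : ℤ, (ζ ^ (2 * m)) ^ p = 1 := by
    intro m
    rw [← zpow_natCast (ζ ^ (2 * m)) p, ← zpow_mul, mul_comm (2 * m) (p : ℤ), zpow_mul,
      zpow_natCast, hzp]
    rw [show (2 : ℤ) * m = 2 * m from rfl, zpow_mul]
    norm_num
  have hx2 : ∀ m : ℤ, (ζ ^ (2 * m)) ^ 2 ≠ -1 := by
    intro m
    rw [← zpow_natCast (ζ ^ (2 * m)) 2, ← zpow_mul]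
    have h : 2 * m * ((2 : ℕ) : ℤ) = 4 * m := by push_cast; ring
    rw [h]
    exact key m
  have hxne : ∀ m : ℤ, (ζ ^ (2 * m) : ℂ) ≠ 0 := fun m => zpow_ne_zero _ hζ0
  -- main computation
  calc ∑ a ∈ (Finset.range p).filter (fun a => Odd a),
        (-1 : ℂ) ^ ((a - 1) / 2) * (ζ ^ (a : ℤ) + ζ ^ (-(a : ℤ))) ^ (2 * l)
      = ∑ a ∈ (Finset.range p).filter (fun a => Odd a),
          ∑ m ∈ Finset.Icc (-(l : ℤ)) (l : ℤ),
            ((2 * l).choose ((l : ℤ) + m).toNat : ℂ) *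
              ((-1 : ℂ) ^ ((a - 1) / 2) * (ζ ^ (2 * m)) ^ a) := by
        refine Finset.sum_congr rfl fun a ha => ?_
        rw [show ζ ^ (-(a : ℤ)) = (ζ ^ (a : ℤ))⁻¹ from zpow_neg ζ a,
          aux_expand (ζ ^ (a : ℤ)) (zpow_ne_zero _ hζ0) l, Finset.mul_sum]
        refine Finset.sum_congr rfl fun m hm => ?_
        rw [← zpow_mul, mul_comm (a : ℤ) (2 * m), zpow_mul, zpow_natCast]
        ring
    _ = ∑ m ∈ Finset.Icc (-(l : ℤ)) (l : ℤ),
          ((2 * l).choose ((l : ℤ) + m).toNat : ℂ) *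
            ∑ a ∈ (Finset.range p).filter (fun a => Odd a),
              (-1 : ℂ) ^ ((a - 1) / 2) * (ζ ^ (2 * m)) ^ a := by
        rw [Finset.sum_comm]
        exact Finset.sum_congr rfl fun m hm => (Finset.mul_sum _ _ _).symm
    _ = 2 * ∑ m ∈ Finset.Icc (-(l : ℤ)) (l : ℤ),
          ((2 * l).choose ((l : ℤ) + m).toNat : ℂ) / (ζ ^ (2 * m) + ζ ^ (-(2 * m))) := by
        rw [Finset.mul_sum]
        refine Finset.sum_congr rfl fun m hm => ?_
        rw [aux_inner p hmod (ζ ^ (2 * m)) (hx1 m) (hx2 m)]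
        have hd : ζ ^ (2 * m) + ζ ^ (-(2 * m)) ≠ 0 := part1 m
        have hnum : (1 : ℂ) + (ζ ^ (2 * m)) ^ 2 ≠ 0 :=
          fun h => hx2 m (by linear_combination h)
        rw [zpow_neg] at hd ⊢
        have hx0 : ζ ^ (2 * m) ≠ 0 := hxne m
        have h7 : ζ ^ (2 * m) + (ζ ^ (2 * m))⁻¹ = (1 + (ζ ^ (2 * m)) ^ 2) / ζ ^ (2 * m) := by
          field_simp
          ring
        rw [h7, div_div_eq_mul_div]
        ring
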